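/- Let K be an algebraically closed field of characteristic p > 2 and m, n ≥ 1. The algebra A_s(m|n) of supersymmetric polynomials is a finitely generated K-algebra. -/

import Mathlib

open MvPolynomial

noncomputable section

/-- The substitution `x_m = y_n = T`, landing in polynomials in `T` over the original ring
(the image only involves the remaining variables). -/
def psiSub (K : Type*) [CommSemiring K] (m n : ℕ) :
    MvPolynomial (Fin m ⊕ Fin n) K →ₐ[K] Polynomial (MvPolynomial (Fin m ⊕ Fin n) K) :=
  MvPolynomial.aeval (Sum.elim
    (fun i : Fin m => if (i : ℕ) = m - 1 then Polynomial.X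
      else Polynomial.C (MvPolynomial.X (Sum.inl i)))
    (fun j : Fin n => if (j : ℕ) = n - 1 then Polynomial.X
      else Polynomial.C (MvPolynomial.X (Sum.inr j))))

/-- `f` is supersymmetric: symmetric in the `x` and `y` variables separately, and
`(d/dT) f|_{x_m = y_n = T} = 0`. -/
def IsSupersymmetric (K : Type*) [CommSemiring K] (m n : ℕ)
    (f : MvPolynomial (Fin m ⊕ Fin n) K) : Prop :=
  (∀ σ : Equiv.Perm (Fin m), MvPolynomial.rename (Sum.map σ id) f = f) ∧
  (∀ τ : Equiv.Perm (Fin n), MvPolynomial.rename (Sum.map id τ) f = f) ∧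
  Polynomial.derivative (psiSub K m n f) = 0

/-- `c_r(x|y) = Σ_{i=0}^{min(r,m)} (−1)^{r−i} σ_i(x) h_{r−i}(y)`. -/
def cpoly (K : Type*) [CommRing K] (m n r : ℕ) : MvPolynomial (Fin m ⊕ Fin n) K :=
  ∑ i ∈ Finset.range (min r m + 1),
    (-1 : MvPolynomial (Fin m ⊕ Fin n) K) ^ (r - i) *
      (MvPolynomial.rename Sum.inl (MvPolynomial.esymm (Fin m) K i)) *
      (MvPolynomial.rename Sum.inr (MvPolynomial.hsymm (Fin n) K (r - i)))

/-- σ_i(x_1,…,x_m), viewed in K[x_1,…,x_m,y_1,…,y_n]. -/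
def sigmaX (K : Type*) [CommSemiring K] (m n i : ℕ) : MvPolynomial (Fin m ⊕ Fin n) K :=
  MvPolynomial.rename Sum.inl (MvPolynomial.esymm (Fin m) K i)

/-- σ_j(y_1,…,y_n), viewed in K[x_1,…,x_m,y_1,…,y_n]. -/
def sigmaY (K : Type*) [CommSemiring K] (m n j : ℕ) : MvPolynomial (Fin m ⊕ Fin n) K :=
  MvPolynomial.rename Sum.inr (MvPolynomial.esymm (Fin n) K j)

/-- The generators of the algebra `A_ns(m|n)` of nice supersymmetric polynomials:
`c_r` (r ≥ 0), `σ_i(x)^p` (1 ≤ i ≤ m), `σ_j(y)^p` (1 ≤ j ≤ n) and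
`u_k = σ_m(x)^k σ_n(y)^{p-k}` (0 < k < p). -/
def nsGens (K : Type*) [CommRing K] (p m n : ℕ) : Set (MvPolynomial (Fin m ⊕ Fin n) K) :=
  {f | ∃ r : ℕ, f = cpoly K m n r} ∪
  {f | ∃ i : ℕ, 1 ≤ i ∧ i ≤ m ∧ f = (sigmaX K m n i) ^ p} ∪
  {f | ∃ j : ℕ, 1 ≤ j ∧ j ≤ n ∧ f = (sigmaY K m n j) ^ p} ∪
  {f | ∃ k : ℕ, 0 < k ∧ k < p ∧ f = (sigmaX K m n m) ^ k * (sigmaY K m n n) ^ (p - k)}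

/-- The evaluation morphism `p_e` sending `x_i ↦ x_i` (i ≤ m), `y_j ↦ y_j` (j ≤ n) and the
remaining variables to `0`. -/
def pe (K : Type*) [CommSemiring K] (M N m n : ℕ) :
    MvPolynomial (Fin M ⊕ Fin N) K →ₐ[K] MvPolynomial (Fin m ⊕ Fin n) K :=
  MvPolynomial.aeval (Sum.elim
    (fun i : Fin M => if h : (i : ℕ) < m then MvPolynomial.X (Sum.inl ⟨(i : ℕ), h⟩) else 0)
    (fun j : Fin N => if h : (j : ℕ) < n then MvPolynomial.X (Sum.inr ⟨(j : ℕ), h⟩) else 0))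

end

noncomputable section AuxProofs

variable (K : Type*) [CommRing K] (m n : ℕ)

/-- The supersymmetric polynomials form a subalgebra. -/
def ssAlg : Subalgebra K (MvPolynomial (Fin m ⊕ Fin n) K) where
  carrier := {f | IsSupersymmetric K m n f}
  mul_mem' {a b} ha hb := by
    refine ⟨fun σ => by rw [map_mul, ha.1 σ, hb.1 σ],
            fun τ => by rw [map_mul, ha.2.1 τ, hb.2.1 τ], ?_⟩
    rw [map_mul, Polynomial.derivative_mul, ha.2.2, hb.2.2, mul_zero, zero_mul, add_zero]
  add_mem' {a b} ha hb := by
    refine ⟨fun σ => by rw [map_add, ha.1 σ, hb.1 σ],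
            fun τ => by rw [map_add, ha.2.1 τ, hb.2.1 τ], ?_⟩
    rw [map_add, Polynomial.derivative_add, ha.2.2, hb.2.2, add_zero]
  algebraMap_mem' r := by
    refine ⟨fun σ => (rename _).commutes r, fun τ => (rename _).commutes r, ?_⟩
    rw [(psiSub K m n).commutes r, Polynomial.algebraMap_apply, Polynomial.derivative_C]

lemma mem_ssAlg (f : MvPolynomial (Fin m ⊕ Fin n) K) :
    f ∈ ssAlg K m n ↔ IsSupersymmetric K m n f := Iff.rfl

variable (p : ℕ) [CharP K p]

lemma pow_p_mem {f : MvPolynomial (Fin m ⊕ Fin n) K}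
    (hx : ∀ σ : Equiv.Perm (Fin m), MvPolynomial.rename (Sum.map σ id) f = f)
    (hy : ∀ τ : Equiv.Perm (Fin n), MvPolynomial.rename (Sum.map id τ) f = f) :
    f ^ p ∈ ssAlg K m n := by
  refine ⟨fun σ => by rw [map_pow, hx σ], fun τ => by rw [map_pow, hy τ], ?_⟩
  rw [map_pow, Polynomial.derivative_pow]
  have : ((p : ℕ) : MvPolynomial (Fin m ⊕ Fin n) K) = 0 := CharP.cast_eq_zero _ p
  rw [this, map_zero, zero_mul, zero_mul]

lemma sigmaX_symm (i : ℕ) :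
    (∀ σ : Equiv.Perm (Fin m), MvPolynomial.rename (Sum.map σ id) (sigmaX K m n i) = sigmaX K m n i) ∧
    (∀ τ : Equiv.Perm (Fin n), MvPolynomial.rename (Sum.map id τ) (sigmaX K m n i) = sigmaX K m n i) := by
  constructor
  · intro σ
    rw [sigmaX, rename_rename]
    have h1 : ((Sum.map (σ : Fin m → Fin m) id) ∘ Sum.inl : Fin m → Fin m ⊕ Fin n) = Sum.inl ∘ (σ : Fin m → Fin m) := rfl
    rw [h1, ← rename_rename, MvPolynomial.esymm_isSymmetric (Fin m) K i σ]
  · intro τ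
    rw [sigmaX, rename_rename]
    have h1 : ((Sum.map id (τ : Fin n → Fin n)) ∘ Sum.inl : Fin m → Fin m ⊕ Fin n) = Sum.inl := rfl
    rw [h1]

lemma sigmaY_symm (j : ℕ) :
    (∀ σ : Equiv.Perm (Fin m), MvPolynomial.rename (Sum.map σ id) (sigmaY K m n j) = sigmaY K m n j) ∧
    (∀ τ : Equiv.Perm (Fin n), MvPolynomial.rename (Sum.map id τ) (sigmaY K m n j) = sigmaY K m n j) := by
  constructor
  · intro σ
    rw [sigmaY, rename_rename]
    have h1 : ((Sum.map (σ : Fin m → Fin m) id) ∘ Sum.inr : Fin n → Fin m ⊕ Fin n) = Sum.inr := rfl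
    rw [h1]
  · intro τ
    rw [sigmaY, rename_rename]
    have h1 : ((Sum.map id (τ : Fin n → Fin n)) ∘ Sum.inr : Fin n → Fin m ⊕ Fin n) = Sum.inr ∘ (τ : Fin n → Fin n) := rfl
    rw [h1, ← rename_rename, MvPolynomial.esymm_isSymmetric (Fin n) K j τ]

lemma sigmaX_pow_mem (i : ℕ) : (sigmaX K m n i) ^ p ∈ ssAlg K m n :=
  pow_p_mem K m n p (sigmaX_symm K m n i).1 (sigmaX_symm K m n i).2

lemma sigmaY_pow_mem (j : ℕ) : (sigmaY K m n j) ^ p ∈ ssAlg K m n :=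
  pow_p_mem K m n p (sigmaY_symm K m n j).1 (sigmaY_symm K m n j).2

/-- Vieta's formula in the needed form. -/
lemma vieta_prod {R : Type*} [CommRing R] {ι : Type*} [Fintype ι] (f : ι → R) :
    (∏ i : ι, (Polynomial.X - Polynomial.C (f i))) =
      ∑ j ∈ Finset.range (Fintype.card ι + 1),
        (-1) ^ j * (Polynomial.C (∑ t ∈ Finset.powersetCard j Finset.univ, t.prod f) *
          Polynomial.X ^ (Fintype.card ι - j)) := by
  have h := Multiset.prod_X_sub_X_eq_sum_esymm ((Finset.univ.val.map f))
  have hcard : Multiset.card (Finset.univ.val.map f) = Fintype.card ι := by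
    rw [Multiset.card_map]; rfl
  rw [hcard] at h
  calc (∏ i : ι, (Polynomial.X - Polynomial.C (f i)))
      = (Multiset.map (fun t => Polynomial.X - Polynomial.C t)
          (Multiset.map f Finset.univ.val)).prod := by
        rw [Multiset.map_map]; rfl
    _ = _ := h
    _ = _ := Finset.sum_congr rfl fun j _ => by rw [Finset.esymm_map_val]

lemma sigmaX_eq (j : ℕ) :
    sigmaX K m n j = ∑ t ∈ Finset.powersetCard j Finset.univ,
      t.prod (fun i : Fin m => MvPolynomial.X (Sum.inl i)) := by
  rw [sigmaX, MvPolynomial.esymm, map_sum]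
  refine Finset.sum_congr rfl fun t _ => ?_
  rw [map_prod]
  simp [rename_X]

lemma sigmaY_eq (j : ℕ) :
    sigmaY K m n j = ∑ t ∈ Finset.powersetCard j Finset.univ,
      t.prod (fun i : Fin n => MvPolynomial.X (Sum.inr i)) := by
  rw [sigmaY, MvPolynomial.esymm, map_sum]
  refine Finset.sum_congr rfl fun t _ => ?_
  rw [map_prod]
  simp [rename_X]

end AuxProofs

noncomputable section Integral

variable (K : Type*) [CommRing K] (m n : ℕ) (p : ℕ) [CharP K p] [Fact p.Prime]

lemma algebraMap_ssAlg_injective :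
    Function.Injective (algebraMap (ssAlg K m n) (MvPolynomial (Fin m ⊕ Fin n) K)) :=
  fun a b h => Subtype.ext h

lemma isIntegral_X_inl (hodd : Odd p) (i : Fin m) :
    IsIntegral (ssAlg K m n) (MvPolynomial.X (Sum.inl i) : MvPolynomial (Fin m ⊕ Fin n) K) := by
  classical
  haveI : ExpChar (Polynomial (MvPolynomial (Fin m ⊕ Fin n) K)) p := ExpChar.prime Fact.out
  let q : Polynomial (ssAlg K m n) := ∑ j ∈ Finset.range (m + 1),
    (-1) ^ j * (Polynomial.C (⟨(sigmaX K m n j) ^ p, sigmaX_pow_mem K m n p j⟩ : ssAlg K m n) *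
      Polynomial.X ^ (p * (m - j)))
  have hmap : q.map (algebraMap (ssAlg K m n) (MvPolynomial (Fin m ⊕ Fin n) K)) =
      (∏ i : Fin m, (Polynomial.X - Polynomial.C (MvPolynomial.X (Sum.inl i) : MvPolynomial (Fin m ⊕ Fin n) K))) ^ p := by
    rw [vieta_prod (fun i : Fin m => (MvPolynomial.X (Sum.inl i) : MvPolynomial (Fin m ⊕ Fin n) K)), Fintype.card_fin,
      sum_pow_char p, Polynomial.map_sum]
    refine Finset.sum_congr rfl fun j _ => ?_
    simp only [Polynomial.map_mul, Polynomial.map_pow, Polynomial.map_neg, Polynomial.map_one,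
      Polynomial.map_C, Polynomial.map_X]
    have h1 : ((-1 : Polynomial (MvPolynomial (Fin m ⊕ Fin n) K)) ^ j) ^ p = (-1) ^ j := by
      rw [← pow_mul, neg_one_pow_eq_pow_mod_two, neg_one_pow_eq_pow_mod_two (n := j),
        Nat.mul_mod, Nat.odd_iff.1 hodd]
      simp
    rw [mul_pow, mul_pow, h1, ← map_pow, ← pow_mul, mul_comm (m - j) p, ← sigmaX_eq]
    congr 1
  have hmonic : q.Monic := by
    rw [Function.Injective.monic_map_iff (algebraMap_ssAlg_injective K m n), hmap]
    exact (Polynomial.monic_prod_of_monic Finset.univ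
      (fun i : Fin m => Polynomial.X - Polynomial.C (MvPolynomial.X (Sum.inl i)))
      (fun i _ => by exact Polynomial.monic_X_sub_C _)).pow p
  refine ⟨q, hmonic, ?_⟩
  rw [Polynomial.eval₂_eq_eval_map, hmap, Polynomial.eval_pow, Polynomial.eval_prod]
  rw [Finset.prod_eq_zero (Finset.mem_univ i) (by simp)]
  exact zero_pow (Nat.Prime.ne_zero Fact.out)

lemma isIntegral_X_inr (hodd : Odd p) (i : Fin n) :
    IsIntegral (ssAlg K m n) (MvPolynomial.X (Sum.inr i) : MvPolynomial (Fin m ⊕ Fin n) K) := by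
  classical
  haveI : ExpChar (Polynomial (MvPolynomial (Fin m ⊕ Fin n) K)) p := ExpChar.prime Fact.out
  let q : Polynomial (ssAlg K m n) := ∑ j ∈ Finset.range (n + 1),
    (-1) ^ j * (Polynomial.C (⟨(sigmaY K m n j) ^ p, sigmaY_pow_mem K m n p j⟩ : ssAlg K m n) *
      Polynomial.X ^ (p * (n - j)))
  have hmap : q.map (algebraMap (ssAlg K m n) (MvPolynomial (Fin m ⊕ Fin n) K)) =
      (∏ i : Fin n, (Polynomial.X - Polynomial.C (MvPolynomial.X (Sum.inr i) : MvPolynomial (Fin m ⊕ Fin n) K))) ^ p := by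
    rw [vieta_prod (fun i : Fin n => (MvPolynomial.X (Sum.inr i) : MvPolynomial (Fin m ⊕ Fin n) K)), Fintype.card_fin,
      sum_pow_char p, Polynomial.map_sum]
    refine Finset.sum_congr rfl fun j _ => ?_
    simp only [Polynomial.map_mul, Polynomial.map_pow, Polynomial.map_neg, Polynomial.map_one,
      Polynomial.map_C, Polynomial.map_X]
    have h1 : ((-1 : Polynomial (MvPolynomial (Fin m ⊕ Fin n) K)) ^ j) ^ p = (-1) ^ j := by
      rw [← pow_mul, neg_one_pow_eq_pow_mod_two, neg_one_pow_eq_pow_mod_two (n := j),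
        Nat.mul_mod, Nat.odd_iff.1 hodd]
      simp
    rw [mul_pow, mul_pow, h1, ← map_pow, ← pow_mul, mul_comm (n - j) p, ← sigmaY_eq]
    congr 1
  have hmonic : q.Monic := by
    rw [Function.Injective.monic_map_iff (algebraMap_ssAlg_injective K m n), hmap]
    exact (Polynomial.monic_prod_of_monic Finset.univ
      (fun i : Fin n => Polynomial.X - Polynomial.C (MvPolynomial.X (Sum.inr i)))
      (fun i _ => by exact Polynomial.monic_X_sub_C _)).pow p
  refine ⟨q, hmonic, ?_⟩
  rw [Polynomial.eval₂_eq_eval_map, hmap, Polynomial.eval_pow, Polynomial.eval_prod]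
  rw [Finset.prod_eq_zero (Finset.mem_univ i) (by simp)]
  exact zero_pow (Nat.Prime.ne_zero Fact.out)

end Integral

noncomputable section

set_option maxHeartbeats 1000000 in
/-- **Proposition 4.2.** In positive characteristic, the algebra `A_s(m|n)` of supersymmetric
polynomials is a finitely generated `K`-algebra. -/
theorem As_finitely_generated (K : Type*) [Field K] [IsAlgClosed K]
    (p : ℕ) [CharP K p] (hp : 2 < p) (m n : ℕ) (hm : 1 ≤ m) (hn : 1 ≤ n) :
    ∃ S : Finset (MvPolynomial (Fin m ⊕ Fin n) K),
      {f : MvPolynomial (Fin m ⊕ Fin n) K | IsSupersymmetric K m n f} =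
        (Algebra.adjoin K (S : Set (MvPolynomial (Fin m ⊕ Fin n) K)) :
          Subalgebra K (MvPolynomial (Fin m ⊕ Fin n) K)) := by
  classical
  have hprime : p.Prime := (CharP.char_is_prime_or_zero K p).resolve_right (by omega)
  haveI : Fact p.Prime := ⟨hprime⟩
  have hodd : Odd p := hprime.odd_of_ne_two (by omega)
  -- C is module-finite over B
  have hint : ∀ x ∈ Set.range (MvPolynomial.X : (Fin m ⊕ Fin n) → MvPolynomial (Fin m ⊕ Fin n) K), IsIntegral (ssAlg K m n) x := by
    rintro x ⟨v, rfl⟩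
    rcases v with i | j
    · exact isIntegral_X_inl K m n p hodd i
    · exact isIntegral_X_inr K m n p hodd j
  have hfg : (Subalgebra.toSubmodule (Algebra.adjoin (ssAlg K m n)
      (Set.range (MvPolynomial.X : (Fin m ⊕ Fin n) → MvPolynomial (Fin m ⊕ Fin n) K)))).FG :=
    fg_adjoin_of_finite (Set.finite_range _) hint
  have hadj : Algebra.adjoin (ssAlg K m n) (Set.range (MvPolynomial.X : (Fin m ⊕ Fin n) → MvPolynomial (Fin m ⊕ Fin n) K)) = ⊤ := by
    rw [eq_top_iff]
    intro x _
    have h1 : Algebra.adjoin K (Set.range (MvPolynomial.X : (Fin m ⊕ Fin n) → MvPolynomial (Fin m ⊕ Fin n) K)) ≤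
        (Algebra.adjoin (ssAlg K m n) (Set.range (MvPolynomial.X : (Fin m ⊕ Fin n) → MvPolynomial (Fin m ⊕ Fin n) K))).restrictScalars K :=
      Algebra.adjoin_le fun y hy => Algebra.subset_adjoin hy
    rw [MvPolynomial.adjoin_range_X] at h1
    exact h1 trivial
  have hBC : (⊤ : Submodule (ssAlg K m n) (MvPolynomial (Fin m ⊕ Fin n) K)).FG := by
    rw [← Algebra.top_toSubmodule, ← hadj]; exact hfg
  have hAC : (⊤ : Subalgebra K (MvPolynomial (Fin m ⊕ Fin n) K)).FG := (inferInstance : Algebra.FiniteType K (MvPolynomial (Fin m ⊕ Fin n) K)).1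
  have htop : (⊤ : Subalgebra K (ssAlg K m n)).FG :=
    fg_of_fg_of_fg K (ssAlg K m n) (MvPolynomial (Fin m ⊕ Fin n) K) hAC hBC (algebraMap_ssAlg_injective K m n)
  obtain ⟨S, hS⟩ := (Subalgebra.fg_top (ssAlg K m n)).1 htop
  exact ⟨S, by rw [hS]; rfl⟩


end
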